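/- Let p be a prime, A, B finite non-empty subsets of ℤ/pℤ with |A + B| = |A| + |B| - 1 ≤ p - 2 and |A|, |B| ≥ 2. Then A and B are arithmetic progressions with the same common difference. -/

import Mathlib

open Finset Pointwise

/-- A finite subset of `ZMod p` is an arithmetic progression with common difference `d`. -/
def IsAPZMod {p : ℕ} (S : Finset (ZMod p)) (d : ZMod p) : Prop :=
  ∃ x : ZMod p, S = (Finset.range S.card).image (fun i : ℕ => x + (i : ℕ) • d)

namespace VosperAux

lemma arith1 (a h n : ℤ) (h3 : 3 ≤ h) (n3 : 3 ≤ n) (hn : n ≤ h) (ha : a + 1 = h + n)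
    (hc : (h*n)^2 ≤ a*(h*n + n*n - n)) : False := by
  have e1 : a = h + n - 1 := by linarith
  subst e1
  have hc' : (h^2*n)*n ≤ ((h+n-1)^2)*n := by nlinarith [hc]
  have key : h^2*n ≤ (h+n-1)^2 := le_of_mul_le_mul_right hc' (by linarith)
  rcases eq_or_lt_of_le n3 with h4 | h4
  · nlinarith [key]
  · nlinarith [key, sq_nonneg (h - n)]
lemma arith2 (h n : ℕ) (h3 : 3 ≤ h) (n3 : 3 ≤ n) : h + n - 1 < h * n := by
  zify [show 1 ≤ h + n by omega]
  nlinarith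

variable {p : ℕ}

lemma exists_nsmul (hp : p.Prime) {d : ZMod p} (hd : d ≠ 0) (z : ZMod p) :
    ∃ i : ℕ, i < p ∧ i • d = z := by
  haveI := Fact.mk hp
  haveI : NeZero p := ⟨hp.pos.ne'⟩
  refine ⟨(z * d⁻¹).val, ZMod.val_lt _, ?_⟩
  rw [nsmul_eq_mul, ZMod.natCast_val, ZMod.cast_id]
  field_simp

lemma nsmul_inj (hp : p.Prime) {d : ZMod p} (hd : d ≠ 0) {i j : ℕ}
    (hi : i < p) (hj : j < p) (h : i • d = j • d) : i = j := by
  haveI := Fact.mk hp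
  haveI : NeZero p := ⟨hp.pos.ne'⟩
  rw [nsmul_eq_mul, nsmul_eq_mul] at h
  have : (i : ZMod p) = j := mul_right_cancel₀ hd h
  have := congrArg ZMod.val this
  rwa [ZMod.val_cast_of_lt hi, ZMod.val_cast_of_lt hj] at this

lemma ap_card_image (hp : p.Prime) {d : ZMod p} (hd : d ≠ 0) (x : ZMod p) {k : ℕ} (hk : k ≤ p) :
    ((Finset.range k).image (fun i : ℕ => x + (i : ℕ) • d)).card = k := by
  rw [Finset.card_image_of_injOn, Finset.card_range]
  intro i hi j hj hij
  simp only [Finset.mem_coe, Finset.mem_range] at hi hj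
  simp only [] at hij
  exact nsmul_inj hp hd (lt_of_lt_of_le hi hk) (lt_of_lt_of_le hj hk) (add_left_cancel hij)

lemma range_of_pred_closed {S : Finset ℕ} (h : ∀ i, i + 1 ∈ S → i ∈ S) :
    S = Finset.range S.card := by
  have key : ∀ x, x ∈ S → ∀ j, j ≤ x → j ∈ S := by
    intro x
    induction x with
    | zero => intro hx j hj; interval_cases j; exact hx
    | succ n ih =>
      intro hx j hj
      rcases Nat.eq_or_lt_of_le hj with rfl | hlt
      · exact hx
      · exact ih (h n hx) j (by omega)
  have hsub : S ⊆ Finset.range S.card := by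
    intro x hx
    rw [Finset.mem_range]
    have : Finset.range (x + 1) ⊆ S := by
      intro i hi
      exact key x hx i (by simpa [Nat.lt_succ_iff] using hi)
    have := Finset.card_le_card this
    simpa using this
  exact Finset.eq_of_subset_of_card_le hsub (by simp)


lemma mem_add_singleton {A : Finset (ZMod p)} {d z : ZMod p} :
    z ∈ A + {d} ↔ z - d ∈ A := by
  simp only [Finset.mem_add, Finset.mem_singleton]
  constructor
  · rintro ⟨a, ha, b, rfl, rfl⟩; simpa using ha
  · intro h; exact ⟨z - d, h, d, rfl, by ring⟩

lemma card_add_singleton' (A : Finset (ZMod p)) (d : ZMod p) : (A + {d}).card = A.card := by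
  rw [Finset.add_singleton]
  exact Finset.card_image_of_injective _ (add_left_injective d)

lemma eq_univ_of_translate [NeZero p] (hp : p.Prime) {d : ZMod p} (hd : d ≠ 0)
    {A : Finset (ZMod p)} (hA : A.Nonempty) (h : A + {d} = A) : A = Finset.univ := by
  have step : ∀ a ∈ A, a + d ∈ A := by
    intro a ha
    rw [← h, mem_add_singleton]; simpa using ha
  obtain ⟨a, ha⟩ := hA
  have key : ∀ i : ℕ, a + i • d ∈ A := by
    intro i
    induction i with
    | zero => simpa using ha
    | succ n ih =>
      have := step _ ih
      rwa [add_assoc, ← succ_nsmul] at this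
  apply Finset.eq_univ_of_forall
  intro z
  obtain ⟨i, _, hi⟩ := exists_nsmul hp hd (z - a)
  have := key i
  rwa [hi, add_sub_cancel] at this

lemma isAP_of_card_union (hp : p.Prime) {d : ZMod p} (hd : d ≠ 0) {A : Finset (ZMod p)}
    (hA : A.Nonempty) (hcard : (A ∪ (A + {d})).card = A.card + 1) : IsAPZMod A d := by
  set T := A + {d} with hT
  have hcT : T.card = A.card := card_add_singleton' A d
  have h1 : (T \ A).card = 1 := by
    have : A ∪ T = A ∪ (T \ A) := (Finset.union_sdiff_self_eq_union).symm
    rw [this, Finset.card_union_of_disjoint Finset.disjoint_sdiff] at hcard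
    omega
  have h2 : (A \ T).card = 1 := by rw [Finset.card_sdiff_comm hcT.symm]; exact h1
  obtain ⟨x, hx⟩ := Finset.card_eq_one.mp h2
  have hxA : x ∈ A ∧ x ∉ T := by
    have := hx ▸ Finset.mem_singleton_self x
    simpa [Finset.mem_sdiff] using this
  set f : ℕ → ZMod p := fun i => x + i • d with hf
  have step : ∀ i, i + 1 < p → f (i + 1) ∈ A → f i ∈ A := by
    intro i hip hfi
    by_contra hni
    have hmem : f (i + 1) ∈ A \ T := by
      rw [Finset.mem_sdiff]
      refine ⟨hfi, fun hmm => hni ?_⟩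
      rw [hT, mem_add_singleton] at hmm
      have : f (i + 1) - d = f i := by
        simp only [hf, succ_nsmul]; ring
      rwa [this] at hmm
    rw [hx, Finset.mem_singleton] at hmem
    have : f (i + 1) = f 0 := by simpa [hf] using hmem
    have := nsmul_inj hp hd hip hp.pos (add_left_cancel this)
    omega
  set S : Finset ℕ := (Finset.range p).filter (fun i => f i ∈ A) with hS
  have hSpred : ∀ i, i + 1 ∈ S → i ∈ S := by
    intro i hi
    simp only [hS, Finset.mem_filter, Finset.mem_range] at hi ⊢
    exact ⟨by omega, step i hi.1 hi.2⟩
  have hAS : A = S.image f := by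
    apply Finset.Subset.antisymm
    · intro a ha
      obtain ⟨i, hi, hid⟩ := exists_nsmul hp hd (a - x)
      refine Finset.mem_image.mpr ⟨i, ?_, by rw [hf]; simp only []; rw [hid]; ring⟩
      simp only [hS, Finset.mem_filter, Finset.mem_range]
      have : f i = a := by simp only [hf]; rw [hid]; ring
      exact ⟨hi, this ▸ ha⟩
    · intro z hz
      obtain ⟨i, hi, rfl⟩ := Finset.mem_image.mp hz
      exact (Finset.mem_filter.mp hi).2
  have hinj : Set.InjOn f S := by
    intro i hi j hj hij
    simp only [hS, Finset.coe_filter, Set.mem_setOf_eq, Finset.mem_range] at hi hj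
    exact nsmul_inj hp hd hi.1 hj.1 (add_left_cancel hij)
  have hcardS : S.card = A.card := by rw [hAS, Finset.card_image_of_injOn hinj]
  refine ⟨x, ?_⟩
  have hA' : A = (Finset.range A.card).image f := by
    conv_lhs => rw [hAS, range_of_pred_closed hSpred, hcardS]
  exact hA'


lemma ap_add_ap {d x y : ZMod p} {k l : ℕ} (hk : 1 ≤ k) (hl : 1 ≤ l) :
    ((Finset.range k).image (fun i : ℕ => x + (i : ℕ) • d)) +
      ((Finset.range l).image (fun i : ℕ => y + (i : ℕ) • d)) =
    (Finset.range (k + l - 1)).image (fun i : ℕ => (x + y) + (i : ℕ) • d) := by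
  ext z
  simp only [Finset.mem_add, Finset.mem_image, Finset.mem_range]
  constructor
  · rintro ⟨u, ⟨i, hi, rfl⟩, v, ⟨j, hj, rfl⟩, rfl⟩
    exact ⟨i + j, by omega, by rw [add_nsmul]; ring⟩
  · rintro ⟨m, hm, rfl⟩
    refine ⟨x + (min m (k-1)) • d, ⟨min m (k-1), by omega, rfl⟩,
      y + (m - min m (k-1)) • d, ⟨m - min m (k-1), by omega, rfl⟩, ?_⟩
    have : min m (k-1) + (m - min m (k-1)) = m := by omega
    rw [show (x + min m (k-1) • d) + (y + (m - min m (k-1)) • d)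
        = (x + y) + (min m (k-1) + (m - min m (k-1))) • d by rw [add_nsmul]; ring, this]

lemma cd (hp : p.Prime) {A B : Finset (ZMod p)} (hA : A.Nonempty) (hB : B.Nonempty)
    (h : (A + B).card < p) : A.card + B.card - 1 ≤ (A + B).card := by
  have := ZMod.cauchy_davenport hp hA hB
  rcases min_choice p (A.card + B.card - 1) with h' | h' <;> omega


/-- a two-element set as an AP image -/
lemma pair_eq_image (y d : ZMod p) :
    ({y, y + d} : Finset (ZMod p)) = (Finset.range 2).image (fun i : ℕ => y + (i : ℕ) • d) := by
  rw [show (2:ℕ) = 1 + 1 by rfl, Finset.range_add_one, Finset.range_one]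
  simp [Finset.image_insert]
  rw [Finset.pair_comm]

/-- if some union A ∪ (A+{d}) has card ≤ |A| + 1 and A can't be everything, it's |A|+1 -/
lemma card_union_eq (hp : p.Prime) {d : ZMod p} (hd : d ≠ 0) {A : Finset (ZMod p)}
    (hA : A.Nonempty) (hup : (A ∪ (A + {d})).card ≤ A.card + 1) (hcp : A.card < p) :
    (A ∪ (A + {d})).card = A.card + 1 := by
  haveI : NeZero p := ⟨hp.pos.ne'⟩
  rcases Nat.lt_or_ge (A ∪ (A + {d})).card (A.card + 1) with h | h
  · exfalso
    have hsub : A ∪ (A + {d}) = A := by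
      have h1 : A ⊆ A ∪ (A + {d}) := Finset.subset_union_left
      exact (Finset.eq_of_subset_of_card_le h1 (by omega)).symm
    have hTA : A + {d} ⊆ A := by
      conv_rhs => rw [← hsub]
      exact Finset.subset_union_right
    have : A + {d} = A := Finset.eq_of_subset_of_card_le hTA
      (le_of_eq (Finset.card_add_singleton A d).symm)
    have := eq_univ_of_translate hp hd hA this
    rw [this] at hcp
    simp [Finset.card_univ, ZMod.card] at hcp
  · omega

lemma card_union_translate (hp : p.Prime) {A B : Finset (ZMod p)} {d : ZMod p} (hd : d ≠ 0)
    (hA : 2 ≤ A.card) (hB : 2 ≤ B.card)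
    (hcrit : (A + B).card + 1 = A.card + B.card) (hle : (A + B).card + 2 ≤ p)
    (hap : IsAPZMod B d) : (A ∪ (A + {d})).card = A.card + 1 := by
  obtain ⟨y, hy⟩ := hap
  set n := B.card with hn
  have hp5 : n + 3 ≤ p := by omega
  set E : Finset (ZMod p) := (Finset.range (n-1)).image (fun i : ℕ => (0:ZMod p) + (i : ℕ) • d)
    with hE
  have hEcard : E.card = n - 1 := ap_card_image hp hd 0 (by omega)
  have hEne : E.Nonempty := by
    rw [← Finset.card_pos, hEcard]; omega
  have hBPE : B = ({y, y + d} : Finset (ZMod p)) + E := by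
    rw [pair_eq_image, hE, ap_add_ap (by norm_num) (by omega)]
    rw [show 2 + (n-1) - 1 = n by omega, add_zero, hy]
  have hassoc : A + B = (A + {y, y + d}) + E := by rw [hBPE, add_assoc]
  have hAPne : (A + ({y, y + d} : Finset (ZMod p))).Nonempty := by
    apply Finset.Nonempty.add
    · rw [← Finset.card_pos]; omega
    · exact ⟨y, by simp⟩
  have hcd := cd hp hAPne hEne (by rw [← hassoc]; omega)
  rw [← hassoc, hEcard] at hcd
  have hup : (A + ({y, y + d} : Finset (ZMod p))).card ≤ A.card + 1 := by omega
  have h1 : A + ({y, y + d} : Finset (ZMod p)) = (A + {y}) ∪ (A + {y + d}) := by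
    rw [Finset.insert_eq, Finset.add_union]
  have h2 : (A ∪ (A + {d})) + {y} = (A + {y}) ∪ (A + {y + d}) := by
    rw [Finset.union_add, add_assoc, Finset.singleton_add_singleton,
      show d + y = y + d from add_comm d y]
  rw [h1, ← h2, Finset.card_add_singleton] at hup
  exact card_union_eq hp hd (by rw [← Finset.card_pos]; omega) hup (by omega)

lemma transfer (hp : p.Prime) {A B : Finset (ZMod p)} {d : ZMod p} (hd : d ≠ 0)
    (hA : 2 ≤ A.card) (hB : 2 ≤ B.card)
    (hcrit : (A + B).card + 1 = A.card + B.card) (hle : (A + B).card + 2 ≤ p)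
    (hap : IsAPZMod B d) : IsAPZMod A d :=
  isAP_of_card_union hp hd (by rw [← Finset.card_pos]; omega)
    (card_union_translate hp hd hA hB hcrit hle hap)

lemma of_sum_isAP (hp : p.Prime) {A B : Finset (ZMod p)} {d : ZMod p} (hd : d ≠ 0)
    (hA : 1 ≤ A.card) (hB : 1 ≤ B.card)
    (hcrit : (A + B).card + 1 = A.card + B.card) (hle : (A + B).card + 2 ≤ p)
    (hap : IsAPZMod (A + B) d) : IsAPZMod A d ∧ IsAPZMod B d := by
  obtain ⟨z, hz⟩ := hap
  set s := (A + B).card with hs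
  have hAne : A.Nonempty := by rw [← Finset.card_pos]; omega
  have hBne : B.Nonempty := by rw [← Finset.card_pos]; omega
  -- P ∪ (P + {d}) is an AP of card s+1
  have hPd : (A + B) + {d} = (Finset.range s).image (fun i : ℕ => (z + d) + (i : ℕ) • d) := by
    rw [show ({d} : Finset (ZMod p)) = (Finset.range 1).image (fun i : ℕ => d + (i : ℕ) • d) by
      simp, hz, ap_add_ap (by omega) (by norm_num)]
    rw [show s + 1 - 1 = s by omega]
  have hunion : (A + B) ∪ ((A + B) + {d}) =
      (Finset.range (s+1)).image (fun i : ℕ => z + (i : ℕ) • d) := by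
    ext w
    simp only [Finset.mem_union, hPd, Finset.mem_image, Finset.mem_range]
    conv_lhs => rw [hz]
    simp only [Finset.mem_image, Finset.mem_range]
    constructor
    · rintro (⟨i, hi, rfl⟩ | ⟨i, hi, rfl⟩)
      · exact ⟨i, by omega, rfl⟩
      · exact ⟨i + 1, by omega, by rw [succ_nsmul]; ring⟩
    · rintro ⟨i, hi, rfl⟩
      rcases Nat.lt_or_ge i s with h | h
      · exact Or.inl ⟨i, h, rfl⟩
      · have : i = (i - 1) + 1 := by omega
        rw [this]
        exact Or.inr ⟨i - 1, by omega, by rw [succ_nsmul]; ring⟩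
  have hUcard : ((A + B) ∪ ((A + B) + {d})).card = s + 1 := by
    rw [hunion]; exact ap_card_image hp hd z (by omega)
  constructor
  · -- A is an AP
    have hsub : (A ∪ (A + {d})) + B = (A + B) ∪ ((A + B) + {d}) := by
      rw [Finset.union_add, add_right_comm]
    have hAune : (A ∪ (A + {d})).Nonempty := hAne.mono Finset.subset_union_left
    have hcd := cd hp hAune hBne (by rw [hsub, hUcard]; omega)
    rw [hsub, hUcard] at hcd
    have hup : (A ∪ (A + {d})).card ≤ A.card + 1 := by omega
    exact isAP_of_card_union hp hd hAne (card_union_eq hp hd hAne hup (by omega))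
  · have hsub : (B ∪ (B + {d})) + A = (A + B) ∪ ((A + B) + {d}) := by
      rw [Finset.union_add, add_right_comm, add_comm B A]
    have hBune : (B ∪ (B + {d})).Nonempty := hBne.mono Finset.subset_union_left
    have hcd := cd hp hBune hAne (by rw [hsub, hUcard]; omega)
    rw [hsub, hUcard] at hcd
    have hup : (B ∪ (B + {d})).card ≤ B.card + 1 := by omega
    exact isAP_of_card_union hp hd hBne (card_union_eq hp hd hBne hup (by omega))


/-- dual fragment -/
lemma frag_dual (hp : p.Prime) [NeZero p] {B X : Finset (ZMod p)} (hB : 1 ≤ B.card)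
    (h2 : 2 ≤ X.card)
    (hcrit : (X + B).card + 1 = X.card + B.card) (hle : (X + B).card + 2 ≤ p) :
    ∃ C : Finset (ZMod p), C.card + (X + B).card = p ∧
      (C + B).card + X.card = p ∧ (C + B).card + 1 = C.card + B.card ∧
      (C + B).card + 2 ≤ p ∧ 2 ≤ C.card := by
  classical
  set C : Finset (ZMod p) := (Finset.univ \ (X + B)).image (fun z => -z) with hC
  have hCcard : C.card + (X + B).card = p := by
    rw [hC, Finset.card_image_of_injective _ neg_injective,
      Finset.card_sdiff_of_subset (Finset.subset_univ _), Finset.card_univ, ZMod.card]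
    have : (X + B).card ≤ p := by omega
    omega
  have hsub : C + B ⊆ Finset.univ \ (X.image (fun z => -z)) := by
    intro w hw
    obtain ⟨c, hc, b, hb, rfl⟩ := Finset.mem_add.mp hw
    rw [hC] at hc
    obtain ⟨z, hz, rfl⟩ := Finset.mem_image.mp hc
    rw [Finset.mem_sdiff] at hz
    rw [Finset.mem_sdiff]
    refine ⟨Finset.mem_univ _, fun hmem => ?_⟩
    obtain ⟨x, hx, hxe⟩ := Finset.mem_image.mp hmem
    apply hz.2
    have : z = x + b := by linear_combination hxe
    rw [this]
    exact Finset.add_mem_add hx hb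
  have hCB_le : (C + B).card + X.card ≤ p := by
    have h1 := Finset.card_le_card hsub
    rw [Finset.card_sdiff_of_subset (Finset.subset_univ _), Finset.card_univ, ZMod.card,
      Finset.card_image_of_injective _ neg_injective] at h1
    have : X.card ≤ p := by
      have := Finset.card_le_univ X; rwa [ZMod.card] at this
    omega
  have hCne : C.Nonempty := by rw [← Finset.card_pos]; omega
  have hBne : B.Nonempty := by rw [← Finset.card_pos]; omega
  have hcd := cd hp hCne hBne (by omega)
  refine ⟨C, hCcard, by omega, by omega, by omega, by omega⟩

/-- Cauchy–Schwarz counting for Sidon sets -/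
lemma sidon_count (hp : p.Prime) {H B : Finset (ZMod p)}
    (sidon : ∀ g : ZMod p, g ≠ 0 → (H ∩ (H + {g})).card ≤ 1) :
    (H.card * B.card) ^ 2 ≤ (H + B).card * (H.card * B.card + B.offDiag.card) := by
  classical
  set R : ZMod p → ℕ := fun s => ((H ×ˢ B).filter (fun q => q.1 + q.2 = s)).card with hR
  have hmaps : ∀ q ∈ H ×ˢ B, q.1 + q.2 ∈ H + B := by
    intro q hq
    rw [Finset.mem_product] at hq
    exact Finset.add_mem_add hq.1 hq.2
  have hsum : ∑ s ∈ H + B, R s = H.card * B.card := by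
    rw [← Finset.card_product]
    exact (Finset.card_eq_sum_card_fiberwise hmaps).symm
  set PP := ((H ×ˢ B) ×ˢ (H ×ˢ B)).filter
      (fun q => q.1.1 + q.1.2 = q.2.1 + q.2.2) with hPP
  have hsq : ∑ s ∈ H + B, R s * R s = PP.card := by
    have hmaps2 : ∀ q ∈ PP, q.1.1 + q.1.2 ∈ H + B := by
      intro q hq
      rw [hPP, Finset.mem_filter, Finset.mem_product] at hq
      exact hmaps _ hq.1.1
    rw [Finset.card_eq_sum_card_fiberwise hmaps2]
    apply Finset.sum_congr rfl
    intro s _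
    have hfib : PP.filter (fun q => q.1.1 + q.1.2 = s) =
        ((H ×ˢ B).filter (fun q => q.1 + q.2 = s)) ×ˢ
          ((H ×ˢ B).filter (fun q => q.1 + q.2 = s)) := by
      ext q
      simp only [hPP, Finset.mem_filter, Finset.mem_product, Finset.mem_filter]
      constructor
      · rintro ⟨⟨⟨h1, h2⟩, heq⟩, hs⟩
        exact ⟨⟨h1, hs⟩, ⟨h2, heq ▸ hs⟩⟩
      · rintro ⟨⟨h1, hs1⟩, ⟨h2, hs2⟩⟩
        exact ⟨⟨⟨h1, h2⟩, by rw [hs1, hs2]⟩, hs1⟩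
    rw [hfib, Finset.card_product, hR]
  -- diagonal/off-diagonal split
  have hdiag : (PP.filter (fun q => q.1 = q.2)).card ≤ H.card * B.card := by
    rw [← Finset.card_product]
    apply Finset.card_le_card_of_injOn (fun q => q.1)
    · intro q hq
      simp only [Finset.mem_coe, hPP, Finset.mem_filter] at hq
      exact (Finset.mem_product.mp hq.1.1).1
    · intro q hq r hr hqr
      simp only [Finset.mem_coe, hPP, Finset.mem_filter] at hq hr
      have hqr' : q.1 = r.1 := hqr
      exact Prod.ext hqr' (by rw [← hq.2, ← hr.2, hqr'])
  have hoff : (PP.filter (fun q => ¬ q.1 = q.2)).card ≤ B.offDiag.card := by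
    apply Finset.card_le_card_of_injOn (fun q => (q.1.2, q.2.2))
    · intro q hq
      simp only [Finset.mem_coe, hPP, Finset.mem_filter, Finset.mem_product] at hq
      obtain ⟨⟨⟨⟨hx, hb⟩, hx', hb'⟩, heq⟩, hne⟩ := hq
      rw [Finset.mem_coe, Finset.mem_offDiag]
      refine ⟨hb, hb', fun hbb => hne ?_⟩
      have hbb' : q.1.2 = q.2.2 := hbb
      rw [hbb'] at heq
      have : q.1.1 = q.2.1 := add_right_cancel heq
      exact Prod.ext this hbb'
    · intro q hq r hr hqr
      simp only [Finset.mem_coe, hPP, Finset.mem_filter, Finset.mem_product] at hq hr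
      obtain ⟨⟨⟨⟨hqx, hqb⟩, hqx', hqb'⟩, hqeq⟩, hqne⟩ := hq
      obtain ⟨⟨⟨⟨hrx, hrb⟩, hrx', hrb'⟩, hreq⟩, hrne⟩ := hr
      have hqr' : (q.1.2, q.2.2) = (r.1.2, r.2.2) := hqr
      obtain ⟨hb2, hb2'⟩ := Prod.mk.inj hqr'
      have hbne : q.1.2 ≠ q.2.2 := by
        intro h
        rw [h] at hqeq
        exact hqne (Prod.ext (add_right_cancel hqeq) h)
      set g : ZMod p := q.2.2 - q.1.2 with hg
      have hgne : g ≠ 0 := sub_ne_zero.mpr (Ne.symm hbne)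
      have hmem : ∀ z : ZMod p, z - g ∈ H → z ∈ H → z ∈ H ∩ (H + {g}) := by
        intro z h1 h2
        rw [Finset.mem_inter]
        refine ⟨h2, Finset.mem_add.mpr ⟨z - g, h1, g, Finset.mem_singleton_self g, by ring⟩⟩
      have hq1 : q.1.1 ∈ H ∩ (H + {g}) := by
        apply hmem _ _ hqx
        have : q.1.1 - g = q.2.1 := by rw [hg]; linear_combination hqeq
        rw [this]; exact hqx'
      have hr1 : r.1.1 ∈ H ∩ (H + {g}) := by
        apply hmem _ _ hrx
        have : r.1.1 - g = r.2.1 := by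
          rw [hg, hb2, hb2']; linear_combination hreq
        rw [this]; exact hrx'
      have hcard1 := sidon g hgne
      have hx_eq : q.1.1 = r.1.1 := by
        have := Finset.card_le_one.mp hcard1 _ hq1 _ hr1
        exact this
      have hx'_eq : q.2.1 = r.2.1 := by
        have e1 : q.2.1 = q.1.1 - g := by rw [hg]; linear_combination -hqeq
        have e2 : r.2.1 = r.1.1 - g := by rw [hg, hb2, hb2']; linear_combination -hreq
        rw [e1, e2, hx_eq]
      exact Prod.ext (Prod.ext hx_eq hb2) (Prod.ext hx'_eq hb2')
  have hPPcard : PP.card ≤ H.card * B.card + B.offDiag.card := by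
    have := Finset.card_filter_add_card_filter_not
      (s := PP) (p := fun q => q.1 = q.2)
    omega
  -- Cauchy-Schwarz over ℤ
  have hCS : ((∑ s ∈ H + B, R s : ℕ) : ℤ) ^ 2 ≤
      ((H + B).card : ℤ) * ∑ s ∈ H + B, ((R s : ℤ)) ^ 2 := by
    have := sq_sum_le_card_mul_sum_sq (s := H + B) (f := fun s => (R s : ℤ))
    push_cast
    exact_mod_cast this
  have h2 : ∑ s ∈ H + B, ((R s : ℤ)) ^ 2 = ((∑ s ∈ H + B, R s * R s : ℕ) : ℤ) := by
    push_cast; apply Finset.sum_congr rfl; intros; ring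
  rw [h2, hsum, hsq] at hCS
  have : ((H.card * B.card : ℕ) : ℤ) ^ 2 ≤
      ((H + B).card : ℤ) * ((H.card * B.card + B.offDiag.card : ℕ) : ℤ) := by
    calc ((H.card * B.card : ℕ) : ℤ) ^ 2 ≤ ((H + B).card : ℤ) * (PP.card : ℤ) := hCS
    _ ≤ _ := by
        apply mul_le_mul_of_nonneg_left _ (by positivity)
        exact_mod_cast hPPcard
  exact_mod_cast this


/-- pigeonhole collision -/
lemma exists_collision {H B : Finset (ZMod p)}
    (hlt : (H + B).card < H.card * B.card) :
    ∃ x ∈ H, ∃ b ∈ B, ∃ x' ∈ H, ∃ b' ∈ B, x + b = x' + b' ∧ b ≠ b' := by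
  by_contra hcon
  push_neg at hcon
  have hinj : Set.InjOn (fun q : ZMod p × ZMod p => q.1 + q.2) ↑(H ×ˢ B) := by
    intro q hq r hr hqr
    simp only [Finset.mem_coe, Finset.mem_product] at hq hr
    have hqr' : q.1 + q.2 = r.1 + r.2 := hqr
    have hb : q.2 = r.2 := hcon q.1 hq.1 q.2 hq.2 r.1 hr.1 r.2 hr.2 hqr'
    rw [hb] at hqr'
    exact Prod.ext (add_right_cancel hqr') hb
  have hmaps : ∀ q ∈ H ×ˢ B, q.1 + q.2 ∈ H + B := by
    intro q hq
    rw [Finset.mem_product] at hq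
    exact Finset.add_mem_add hq.1 hq.2
  have := Finset.card_le_card_of_injOn _ hmaps hinj
  rw [Finset.card_product] at this
  omega

/-- the case of a fragment of size two -/
lemma ap_of_pair_frag (hp : p.Prime) {B : Finset (ZMod p)} {u v : ZMod p} (huv : u ≠ v)
    (hBne : B.Nonempty)
    (hcard : (({u, v} : Finset (ZMod p)) + B).card = B.card + 1)
    (hle : (({u, v} : Finset (ZMod p)) + B).card + 2 ≤ p) :
    IsAPZMod B (v - u) := by
  set d := v - u with hd
  have hdne : d ≠ 0 := sub_ne_zero.mpr (Ne.symm huv)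
  have hsplit : ({u, v} : Finset (ZMod p)) + B = (B ∪ (B + {d})) + {u} := by
    rw [Finset.insert_eq, Finset.union_add, Finset.union_add]
    congr 1
    · rw [add_comm]
    · rw [add_assoc, Finset.singleton_add_singleton, add_comm ({v} : Finset (ZMod p)) B,
        show d + u = v by rw [hd]; ring]
  rw [hsplit, Finset.card_add_singleton] at hcard hle
  have hBp : B.card < p := by omega
  exact isAP_of_card_union hp hdne hBne (card_union_eq hp hdne hBne (le_of_eq hcard) hBp)

lemma vosper_rec (hp : p.Prime) : ∀ n : ℕ, ∀ A B : Finset (ZMod p), B.card = n →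
    2 ≤ A.card → 2 ≤ B.card → (A + B).card + 1 = A.card + B.card → (A + B).card + 2 ≤ p →
    ∃ d : ZMod p, d ≠ 0 ∧ IsAPZMod A d ∧ IsAPZMod B d := by
  intro n
  induction n using Nat.strong_induction_on with
  | _ n IH =>
  intro A B hBn hA2 hB2 hcrit hle
  haveI : NeZero p := ⟨hp.pos.ne'⟩
  have hBne : B.Nonempty := by rw [← Finset.card_pos]; omega
  have hAne : A.Nonempty := by rw [← Finset.card_pos]; omega
  -- base case n = 2
  rcases eq_or_lt_of_le hB2 with hn2 | hn3
  · obtain ⟨u, v, huv, hB⟩ := Finset.card_eq_two.mp hn2.symm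
    have hdne : v - u ≠ 0 := sub_ne_zero.mpr (Ne.symm huv)
    have hBAP : IsAPZMod B (v - u) := by
      refine ⟨u, ?_⟩
      have hc : (B.card : ℕ) = 2 := hn2.symm
      rw [hB] at hc ⊢
      rw [hc, ← pair_eq_image u (v - u), show u + (v - u) = v from by ring]
    exact ⟨v - u, hdne, transfer hp hdne hA2 hB2 hcrit hle hBAP, hBAP⟩
  · -- n ≥ 3 : fragment machinery
    classical
    have hn3' : 3 ≤ n := by omega
    set Frag : Finset (ZMod p) → Prop :=
      fun X => 2 ≤ X.card ∧ (X + B).card + 1 = X.card + n ∧ (X + B).card + 2 ≤ p with hFrag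
    set FR : Finset (Finset (ZMod p)) := Finset.univ.filter Frag with hFR
    have hmemFR : ∀ X : Finset (ZMod p), X ∈ FR ↔ Frag X := by
      intro X; rw [hFR, Finset.mem_filter]; simp
    have hAFR : A ∈ FR := (hmemFR A).mpr ⟨hA2, by omega, by omega⟩
    obtain ⟨H, hHFR, hHmin⟩ := FR.exists_min_image Finset.card ⟨A, hAFR⟩
    obtain ⟨hH2, hHcrit, hHle⟩ := (hmemFR H).mp hHFR
    have hHne : H.Nonempty := by rw [← Finset.card_pos]; omega
    -- dual fragment gives the size bound 2|H| + n ≤ p + 1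
    obtain ⟨C, hC1, hC2, hC3, hC4, hC5⟩ :=
      frag_dual hp (B := B) (X := H) (by omega) hH2 (by omega) hHle
    have hCFR : C ∈ FR := (hmemFR C).mpr ⟨hC5, by omega, hC4⟩
    have h2hp : 2 * H.card + n ≤ p + 1 := by
      have := hHmin C hCFR
      omega
    rcases eq_or_lt_of_le hH2 with hh2 | hh3
    · -- minimal fragment of size 2
      obtain ⟨u, v, huv, hH⟩ := Finset.card_eq_two.mp hh2.symm
      rw [hH] at hHcrit hHle
      have hc2 : ({u, v} : Finset (ZMod p)).card = 2 := by rw [← hH, ← hh2]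
      have hBAP : IsAPZMod B (v - u) :=
        ap_of_pair_frag hp huv hBne (by omega) hHle
      have hdne : v - u ≠ 0 := sub_ne_zero.mpr (Ne.symm huv)
      exact ⟨v - u, hdne, transfer hp hdne hA2 hB2 hcrit hle hBAP, hBAP⟩
    · -- minimal fragment of size ≥ 3 : Sidon property
      have sidon : ∀ g : ZMod p, g ≠ 0 → (H ∩ (H + {g})).card ≤ 1 := by
        intro g hg
        by_contra hI
        push_neg at hI
        set I := H ∩ (H + {g}) with hIdef
        set U := H ∪ (H + {g}) with hUdef
        have hcardT : (H + {g}).card = H.card := Finset.card_add_singleton H g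
        have hHneq : H ≠ H + {g} := by
          intro heq
          have huniv := eq_univ_of_translate hp hg hHne heq.symm
          have : H.card = p := by
            rw [huniv, Finset.card_univ, ZMod.card]
          omega
        have hIH : I ⊆ H := Finset.inter_subset_left
        have hIlt : I.card < H.card := by
          rcases lt_or_ge I.card H.card with h' | h'
          · exact h'
          · exfalso
            have hIHeq : I = H := Finset.eq_of_subset_of_card_le hIH h'
            have hsub2 : H ⊆ H + {g} := by
              intro z hz
              have : z ∈ I := hIHeq.symm ▸ hz
              exact (Finset.mem_inter.mp this).2
            exact hHneq (Finset.eq_of_subset_of_card_le hsub2 (le_of_eq hcardT))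
        have hIB : (I + B) ⊆ (H + B) ∩ ((H + B) + {g}) := by
          apply Finset.subset_inter
          · exact Finset.add_subset_add_right hIH
          · have h1 : I + B ⊆ (H + {g}) + B :=
              Finset.add_subset_add_right Finset.inter_subset_right
            rwa [add_right_comm] at h1
        have hUB : U + B = (H + B) ∪ ((H + B) + {g}) := by
          rw [hUdef, Finset.union_add, add_right_comm]
        have hiu : I.card + U.card = H.card + H.card := by
          have h5 := Finset.card_inter_add_card_union H (H + {g})
          rw [← hIdef, ← hUdef] at h5
          omega
        have hIBle : (I + B).card ≤ (H + B).card :=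
          Finset.card_le_card (Finset.add_subset_add_right hIH)
        have hIne : I.Nonempty := by rw [← Finset.card_pos]; omega
        have f3 := cd hp hIne hBne (by omega)
        rw [hBn] at f3
        have hsum2 : (I + B).card + (U + B).card ≤ (H + B).card + (H + B).card := by
          have h1 := Finset.card_le_card hIB
          have h2 := Finset.card_inter_add_card_union (H + B) ((H + B) + {g})
          have h3 : ((H + B) + {g}).card = (H + B).card := Finset.card_add_singleton _ g
          rw [hUB]
          omega
        have hUne : U.Nonempty := hHne.mono Finset.subset_union_left
        have hUBlt : (U + B).card < p := by omega
        have f4 := cd hp hUne hBne hUBlt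
        rw [hBn] at f4
        have hIfrag : Frag I := by
          refine ⟨hI, by omega, by omega⟩
        have := hHmin I ((hmemFR I).mpr hIfrag)
        omega
      -- counting gives |H| < n
      have hcount := sidon_count hp (B := B) sidon
      rw [Finset.offDiag_card, hBn] at hcount
      have hhn : H.card < n := by
        rcases lt_or_ge H.card n with h' | h'
        · exact h'
        · exfalso
          have hnn : n ≤ n * n := Nat.le_mul_of_pos_left n (by omega)
          have hcount' : (((H.card : ℤ) * n)^2) ≤
              ((H + B).card : ℤ) * ((H.card : ℤ) * n + (n : ℤ) * n - n) := by
            have := hcount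
            zify [hnn] at this
            linarith
          exact arith1 ((H + B).card : ℤ) (H.card : ℤ) (n : ℤ)
            (by exact_mod_cast hh3) (by exact_mod_cast hn3')
            (by exact_mod_cast h') (by exact_mod_cast hHcrit) hcount'
      -- collision and Dyson transform
      have hlt : (H + B).card < H.card * B.card := by
        rw [hBn]
        have := arith2 H.card n hh3 hn3'
        omega
      obtain ⟨x, hx, b, hb, x', hx', b', hb', heq, hbb⟩ := exists_collision hlt
      set e := x - b' with he
      set Ye : Finset (ZMod p) := B.filter (fun b0 => b0 + e ∈ H) with hYedef
      set Xe : Finset (ZMod p) := H ∪ (B + {e}) with hXedef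
      have hb'Ye : b' ∈ Ye := by
        rw [hYedef, Finset.mem_filter]
        refine ⟨hb', ?_⟩
        rw [he, show b' + (x - b') = x from by ring]
        exact hx
      have hbYe : b ∈ Ye := by
        rw [hYedef, Finset.mem_filter]
        refine ⟨hb, ?_⟩
        rw [he, show b + (x - b') = x' from by linear_combination heq]
        exact hx'
      have hYe2 : 2 ≤ Ye.card := by
        rw [show (2:ℕ) = 1 + 1 from rfl, ← Nat.lt_iff_add_one_le]
        exact Finset.one_lt_card.mpr ⟨b, hbYe, b', hb'Ye, hbb⟩
      have him : Ye.image (· + e) = H ∩ (B + {e}) := by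
        ext z
        rw [Finset.mem_image, Finset.mem_inter, mem_add_singleton]
        constructor
        · rintro ⟨b0, hb0, rfl⟩
          rw [hYedef, Finset.mem_filter] at hb0
          exact ⟨hb0.2, by rw [add_sub_cancel_right]; exact hb0.1⟩
        · rintro ⟨hzH, hzB⟩
          refine ⟨z - e, ?_, by ring⟩
          rw [hYedef, Finset.mem_filter]
          exact ⟨hzB, by rw [sub_add_cancel]; exact hzH⟩
      have hYecard : Ye.card = (H ∩ (B + {e})).card := by
        rw [← him, Finset.card_image_of_injective _ (add_left_injective e)]
      have hXcards : Xe.card + Ye.card = H.card + n := by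
        have h1 := Finset.card_union_add_card_inter H (B + {e})
        have h2 : (B + {e}).card = n := by rw [Finset.card_add_singleton, hBn]
        rw [hXedef]
        omega
      have hYeB : Ye ⊆ B := Finset.filter_subset _ _
      have hYeleH : Ye.card ≤ H.card := by
        rw [hYecard]
        exact Finset.card_le_card Finset.inter_subset_left
      have hXe2 : 2 ≤ Xe.card := by omega
      have hsubsum : Xe + Ye ⊆ H + B := by
        intro z hz
        obtain ⟨u, hu, v, hv, rfl⟩ := Finset.mem_add.mp hz
        have hvB : v ∈ B := hYeB hv
        have hvH : v + e ∈ H := by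
          rw [hYedef, Finset.mem_filter] at hv; exact hv.2
        rcases Finset.mem_union.mp (hXedef ▸ hu) with huH | huB
        · exact Finset.add_mem_add huH hvB
        · have huB' : u - e ∈ B := mem_add_singleton.mp huB
          rw [show u + v = (v + e) + (u - e) from by ring]
          exact Finset.add_mem_add hvH huB'
      have hXYle : (Xe + Ye).card ≤ (H + B).card := Finset.card_le_card hsubsum
      have hXene : Xe.Nonempty := hHne.mono Finset.subset_union_left
      have hYene : Ye.Nonempty := by rw [← Finset.card_pos]; omega
      have hcd2 := cd hp hXene hYene (by omega)
      have hXYcard : (Xe + Ye).card = (H + B).card := by omega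
      have hXYeq : Xe + Ye = H + B :=
        Finset.eq_of_subset_of_card_le hsubsum (by omega)
      obtain ⟨d, hd, hXAP, hYAP⟩ := IH Ye.card (by omega) Xe Ye rfl hXe2 hYe2
        (by omega) (by omega)
      obtain ⟨x0, hx0⟩ := hXAP
      obtain ⟨y0, hy0⟩ := hYAP
      have hsumAP : IsAPZMod (H + B) d := by
        refine ⟨x0 + y0, ?_⟩
        rw [← hXYeq]
        conv_lhs => rw [hx0, hy0]
        rw [ap_add_ap (by omega) (by omega)]
        rw [show Xe.card + Ye.card - 1 = (Xe + Ye).card by omega]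
      have hHB_AP := of_sum_isAP hp hd (by omega) (by omega) (by omega) hHle hsumAP
      exact ⟨d, hd, transfer hp hd hA2 hB2 hcrit hle hHB_AP.2, hHB_AP.2⟩


end VosperAux

theorem stmt_19 (p : ℕ) (hp : p.Prime) (A B : Finset (ZMod p))
    (hA : 2 ≤ A.card) (hB : 2 ≤ B.card)
    (hsum : (A + B).card = A.card + B.card - 1)
    (hle : A.card + B.card - 1 ≤ p - 2) :
    ∃ d : ZMod p, d ≠ 0 ∧ IsAPZMod A d ∧ IsAPZMod B d := by
  have hp2 : 2 ≤ p := hp.two_le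
  have hcrit : (A + B).card + 1 = A.card + B.card := by omega
  have hle' : (A + B).card + 2 ≤ p := by omega
  exact VosperAux.vosper_rec hp B.card A B rfl hA hB hcrit hle'
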